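/- The qubit map Φ defined by Φ(ρ) = (1/2) [[ρ₁₁+ρ₂₂, -ρ₁₁+ρ₂₂], [-ρ₁₁+ρ₂₂, ρ₁₁+ρ₂₂]] is a linear map on ℂ^{2×2} that is trace-preserving and completely positive, but is not diagonalizable as a linear operator on ℂ^{2×2}. -/

import Mathlib

open scoped ComplexOrder

/-- The qubit map `Φ(ρ) = (1/2)[[ρ₁₁+ρ₂₂, -ρ₁₁+ρ₂₂],[-ρ₁₁+ρ₂₂, ρ₁₁+ρ₂₂]]` is trace-preserving
and completely positive (its Choi matrix is PSD), but not diagonalizable. -/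
theorem stmt_8
    (Φ : Matrix (Fin 2) (Fin 2) ℂ →ₗ[ℂ] Matrix (Fin 2) (Fin 2) ℂ)
    (hΦ : ∀ ρ : Matrix (Fin 2) (Fin 2) ℂ,
      Φ ρ = (2⁻¹ : ℂ) • !![ρ 0 0 + ρ 1 1, -ρ 0 0 + ρ 1 1;
                           -ρ 0 0 + ρ 1 1, ρ 0 0 + ρ 1 1]) :
    (∀ ρ : Matrix (Fin 2) (Fin 2) ℂ, (Φ ρ).trace = ρ.trace) ∧
    (Matrix.of fun p q : Fin 2 × Fin 2 =>
        (Φ (Matrix.single p.1 q.1 1)) p.2 q.2).PosSemidef ∧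
    ¬ ∃ (b : Module.Basis (Fin 4) ℂ (Matrix (Fin 2) (Fin 2) ℂ)) (μ : Fin 4 → ℂ),
        ∀ i, Φ (b i) = μ i • b i := by
  have hE : ∀ ρ (i j : Fin 2), Φ ρ i j =
      2⁻¹ * (!![ρ 0 0 + ρ 1 1, -ρ 0 0 + ρ 1 1;
                -ρ 0 0 + ρ 1 1, ρ 0 0 + ρ 1 1] i j) := by
    intro ρ i j; rw [hΦ ρ]; simp [Matrix.smul_apply]
  refine ⟨?_, ?_, ?_⟩
  · -- trace preserving
    intro ρ
    rw [hΦ ρ]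
    simp [Matrix.trace_fin_two, Matrix.smul_apply]
    ring
  · -- Choi matrix is PSD
    refine Matrix.PosSemidef.of_dotProduct_mulVec_nonneg ?_ ?_
    · ext ⟨p1, p2⟩ ⟨q1, q2⟩
      fin_cases p1 <;> fin_cases p2 <;> fin_cases q1 <;> fin_cases q2 <;>
        simp [Matrix.conjTranspose_apply, hE, Matrix.single]
    · intro x
      have key : dotProduct (star x)
          ((Matrix.of fun p q : Fin 2 × Fin 2 =>
            (Φ (Matrix.single p.1 q.1 1)) p.2 q.2).mulVec x)
          = 2⁻¹ * (star (x (0, 0) - x (0, 1)) * (x (0, 0) - x (0, 1)))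
          + 2⁻¹ * (star (x (1, 0) + x (1, 1)) * (x (1, 0) + x (1, 1))) := by
        simp [dotProduct, Matrix.mulVec, Matrix.of_apply,
          Fintype.sum_prod_type, Fin.sum_univ_two, hE, Matrix.single]
        ring
      rw [key]
      have h2 : (0:ℂ) ≤ 2⁻¹ := by
        rw [show ((2:ℂ)⁻¹) = (((2:ℝ)⁻¹ : ℝ) : ℂ) by push_cast; ring]
        rw [Complex.zero_le_real]; norm_num
      have t1 := star_mul_self_nonneg (x (0, 0) - x (0, 1))
      have t2 := star_mul_self_nonneg (x (1, 0) + x (1, 1))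
      exact add_nonneg (mul_nonneg h2 t1) (mul_nonneg h2 t2)
  · -- not diagonalizable
    rintro ⟨b, μ, hb⟩
    have h2 : ∀ ρ, Φ (Φ ρ) = !![2⁻¹ * (ρ 0 0 + ρ 1 1), 0;
                                 0, 2⁻¹ * (ρ 0 0 + ρ 1 1)] := by
      intro ρ
      rw [hΦ (Φ ρ)]
      ext i j
      fin_cases i <;> fin_cases j <;>
        simp [Matrix.smul_apply, hE ρ] <;> ring
    have h3 : ∀ ρ, Φ (Φ (Φ ρ)) = Φ (Φ ρ) := by
      intro ρ
      rw [h2 (Φ ρ), h2 ρ, hE ρ 0 0, hE ρ 1 1]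
      norm_num
      ring_nf
    have hμ : ∀ i, μ i ^ 2 = μ i := by
      intro i
      have e2 : Φ (Φ (b i)) = μ i ^ 2 • b i := by
        rw [hb i, map_smul, hb i, smul_smul, sq]
      have e3 : Φ (Φ (Φ (b i))) = μ i ^ 3 • b i := by
        rw [e2, map_smul, hb i, smul_smul]
        ring_nf
      have heq := h3 (b i)
      rw [e3, e2] at heq
      have hbne : b i ≠ 0 := b.ne_zero i
      have h0 : (μ i ^ 3 - μ i ^ 2) • b i = 0 := by
        rw [sub_smul, heq, sub_self]
      have h32 : μ i ^ 3 - μ i ^ 2 = 0 := by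
        rcases smul_eq_zero.1 h0 with h | h
        · exact h
        · exact absurd h hbne
      have hfac : μ i ^ 2 * (μ i - 1) = 0 := by linear_combination h32
      rcases mul_eq_zero.1 hfac with h | h
      · rw [sq_eq_zero_iff.1 h]; ring
      · rw [sub_eq_zero.1 h]; ring
    -- hence Φ ∘ Φ = Φ
    have hcomp : ∀ ρ, Φ (Φ ρ) = Φ ρ := by
      have : Φ.comp Φ = Φ := by
        apply b.ext
        intro i
        simp only [LinearMap.comp_apply, hb i, map_smul, hb i, smul_smul]
        rw [← sq, hμ i]
      intro ρ
      have := congrArg (fun f => f ρ) this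
      simpa using this
    -- contradiction at E₀₀, entry (0,1)
    have hc := hcomp !![1, 0; 0, 0]
    rw [h2 !![1, 0; 0, 0]] at hc
    have hc01 : (!![2⁻¹ * ((!![1, 0; 0, 0] : Matrix (Fin 2) (Fin 2) ℂ) 0 0 + !![1, 0; 0, 0] 1 1), 0;
        0, 2⁻¹ * (!![(1:ℂ), 0; 0, 0] 0 0 + !![(1:ℂ), 0; 0, 0] 1 1)] : Matrix (Fin 2) (Fin 2) ℂ) 0 1
        = Φ !![1, 0; 0, 0] 0 1 := by rw [hc]
    rw [hE !![1, 0; 0, 0] 0 1] at hc01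
    norm_num at hc01
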